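/- arXiv:1609.05539 — 3 statements merged into one kernel-verified Lean document; each statement's English description precedes it below -/
import Mathlib

section
/- One-step expected contraction of randomized coordinate descent: let f : ℝ^d → ℝ be differentiable with ∇f L-Lipschitz and f m-strongly convex, 0 < m ≤ L, and let x* be the minimizer of f (so ∇f(x*) = 0). Fix a step size t > 0 and a point y ∈ ℝ^d. If S is uniformly distributed on {1,…,d} and [∇f(y)]_S ∈ ℝ^d denotes the vector whose only nonzero entry is the S-th partial derivative ∂f(y)/∂y_S in position S, then E_S ‖y − t·d·[∇f(y)]_S − x*‖² ≤ C ‖y − x*‖², where C = t²L²d − 2tm + 1. -/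
open scoped RealInnerProductSpace

lemma gradient_zero_of_min {d : ℕ} (f : EuclideanSpace ℝ (Fin d) → ℝ)
    (xstar : EuclideanSpace ℝ (Fin d)) (hmin : ∀ z, f xstar ≤ f z) :
    gradient f xstar = 0 := by
  have h : IsLocalMin f xstar := Filter.Eventually.of_forall hmin
  rw [gradient, h.fderiv_eq_zero, map_zero]

/-- One-step expected contraction of randomized coordinate descent: for `f` with
`L`-Lipschitz gradient and `m`-strongly convex, minimizer `x*`, step size `t > 0`,
and `S` uniform on the `d` coordinates,
`E_S ‖y − t·d·[∇f(y)]_S − x*‖² ≤ (t²L²d − 2tm + 1)·‖y − x*‖²`. -/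
theorem rcd_one_step_contraction (d : ℕ) (hd : 1 ≤ d) (L m t : ℝ)
    (hm : 0 < m) (hmL : m ≤ L) (ht : 0 < t)
    (f : EuclideanSpace ℝ (Fin d) → ℝ) (hf : Differentiable ℝ f)
    (hLip : ∀ x y : EuclideanSpace ℝ (Fin d),
      ‖gradient f x - gradient f y‖ ≤ L * ‖x - y‖)
    (hsc : ∀ x y : EuclideanSpace ℝ (Fin d),
      m * ‖x - y‖ ^ 2 ≤ ⟪gradient f x - gradient f y, x - y⟫)
    (xstar : EuclideanSpace ℝ (Fin d)) (hmin : ∀ z, f xstar ≤ f z)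
    (y : EuclideanSpace ℝ (Fin d)) :
    (1 / d : ℝ) * ∑ i : Fin d,
        ‖y - (t * d) • EuclideanSpace.single i (gradient f y i) - xstar‖ ^ 2
      ≤ (t ^ 2 * L ^ 2 * d - 2 * t * m + 1) * ‖y - xstar‖ ^ 2 := by
  set g := gradient f y with hg
  set v := y - xstar with hv
  have hgz : gradient f xstar = 0 := gradient_zero_of_min f xstar hmin
  have hdpos : (0:ℝ) < d := by exact_mod_cast hd
  -- expand each term
  have hterm : ∀ i : Fin d,
      ‖y - (t * d) • EuclideanSpace.single i (g i) - xstar‖ ^ 2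
        = ‖v‖ ^ 2 - 2 * (t * d) * (g i * v i) + (t * d) ^ 2 * (g i) ^ 2 := by
    intro i
    have : y - (t * d) • EuclideanSpace.single i (g i) - xstar
        = v - (t * d) • EuclideanSpace.single i (g i) := by
      rw [hv]; abel
    rw [this, norm_sub_sq_real, real_inner_smul_right, EuclideanSpace.inner_single_right, norm_smul, EuclideanSpace.norm_single]
    have : starRingEnd ℝ (v i) = v i := rfl
    rw [this]
    rw [mul_pow]
    have : ‖t * (d:ℝ)‖ ^ 2 = (t * d) ^ 2 := sq_abs _
    rw [this]
    have : ‖g i‖ ^ 2 = (g i) ^ 2 := sq_abs _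
    rw [this]
    ring
  have hsum : ∑ i : Fin d,
      ‖y - (t * d) • EuclideanSpace.single i (g i) - xstar‖ ^ 2
        = d * ‖v‖ ^ 2 - 2 * (t * d) * ⟪g, v⟫ + (t * d) ^ 2 * ‖g‖ ^ 2 := by
    simp_rw [hterm, Finset.sum_add_distrib, Finset.sum_sub_distrib,
      ← Finset.mul_sum, Finset.sum_const, Finset.card_univ, Fintype.card_fin,
      nsmul_eq_mul]
    have h1 : ⟪g, v⟫ = ∑ i : Fin d, g i * v i := by
      rw [PiLp.inner_apply]; exact Finset.sum_congr rfl (fun i _ => by simp [mul_comm])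
    have h2 : ‖g‖ ^ 2 = ∑ i : Fin d, (g i) ^ 2 := by
      rw [← real_inner_self_eq_norm_sq, PiLp.inner_apply]
      simp [sq]
    rw [h1, h2]
  rw [hsum]
  have hinner : m * ‖v‖ ^ 2 ≤ ⟪g, v⟫ := by
    have := hsc y xstar
    rwa [hgz, sub_zero] at this
  have hnorm : ‖g‖ ^ 2 ≤ L ^ 2 * ‖v‖ ^ 2 := by
    have h1 : ‖g‖ ≤ L * ‖v‖ := by
      have := hLip y xstar
      rwa [hgz, sub_zero] at this
    have hL : (0:ℝ) ≤ L := le_trans hm.le hmL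
    calc ‖g‖ ^ 2 ≤ (L * ‖v‖) ^ 2 := by
          apply pow_le_pow_left₀ (norm_nonneg _) h1
      _ = L ^ 2 * ‖v‖ ^ 2 := by ring
  have key : (1 / d : ℝ) * (d * ‖v‖ ^ 2 - 2 * (t * d) * ⟪g, v⟫ + (t * d) ^ 2 * ‖g‖ ^ 2)
      = ‖v‖ ^ 2 - 2 * t * ⟪g, v⟫ + t ^ 2 * d * ‖g‖ ^ 2 := by
    field_simp
  rw [key]
  have h2 : t ^ 2 * d * ‖g‖ ^ 2 ≤ t ^ 2 * d * (L ^ 2 * ‖v‖ ^ 2) :=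
    mul_le_mul_of_nonneg_left hnorm (by positivity)
  have h3 : 2 * t * (m * ‖v‖ ^ 2) ≤ 2 * t * ⟪g, v⟫ :=
    mul_le_mul_of_nonneg_left hinner (by positivity)
  nlinarith [h2, h3]
end

section
/- Expected squared error after k steps of unquantized randomized coordinate descent contracts geometrically: under the setting of randomized coordinate descent with step size t > 0 such that C = t²L²d − 2tm + 1 < 1, started at x_0 with i.i.d. uniform coordinate choices S_1, S_2, …, and updates x_{j+1} = x_j − t·d·[∇f(x_j)]_{S_{j+1}}, one has E‖x_k − x*‖² ≤ C^k ‖x_0 − x*‖² for all k ≥ 0. -/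
open scoped RealInnerProductSpace

noncomputable def rcdIter {d : ℕ} (f : EuclideanSpace ℝ (Fin d) → ℝ) (t : ℝ)
    (x0 : EuclideanSpace ℝ (Fin d)) (s : ℕ → Fin d) : ℕ → EuclideanSpace ℝ (Fin d)
  | 0 => x0
  | j + 1 => rcdIter f t x0 s j -
      (t * d) • EuclideanSpace.single (s j) (gradient f (rcdIter f t x0 s j) (s j))

lemma rcdIter_succ {d : ℕ} (f : EuclideanSpace ℝ (Fin d) → ℝ) (t : ℝ)
    (x0 : EuclideanSpace ℝ (Fin d)) (s : ℕ → Fin d) (k : ℕ) :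
    rcdIter f t x0 s (k + 1) = rcdIter f t x0 s k -
      (t * d) • EuclideanSpace.single (s k) (gradient f (rcdIter f t x0 s k) (s k)) := rfl

lemma rcdIter_congr {d : ℕ} (f : EuclideanSpace ℝ (Fin d) → ℝ) (t : ℝ)
    (x0 : EuclideanSpace ℝ (Fin d)) (s s' : ℕ → Fin d) :
    ∀ k : ℕ, (∀ j, j < k → s j = s' j) → rcdIter f t x0 s k = rcdIter f t x0 s' k := by
  intro k
  induction k with
  | zero => intro _; rfl
  | succ k ih =>
    intro h
    have h1 : rcdIter f t x0 s k = rcdIter f t x0 s' k :=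
      ih fun j hj => h j (Nat.lt_succ_of_lt hj)
    rw [rcdIter_succ, rcdIter_succ, h1, h k (Nat.lt_succ_self k)]

lemma rcdIter_snoc {d : ℕ} (hd : 1 ≤ d) (f : EuclideanSpace ℝ (Fin d) → ℝ) (t : ℝ)
    (x0 : EuclideanSpace ℝ (Fin d)) (k : ℕ) (s' : Fin k → Fin d) (i : Fin d) :
    rcdIter f t x0
        (fun j => if h : j < k + 1 then (Fin.snoc s' i : Fin (k + 1) → Fin d) ⟨j, h⟩ else ⟨0, hd⟩)
        (k + 1)
      = rcdIter f t x0 (fun j => if h : j < k then s' ⟨j, h⟩ else ⟨0, hd⟩) k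
        - (t * d) • EuclideanSpace.single i
            (gradient f (rcdIter f t x0 (fun j => if h : j < k then s' ⟨j, h⟩ else ⟨0, hd⟩) k) i) := by
  have hcongr : rcdIter f t x0
      (fun j => if h : j < k + 1 then (Fin.snoc s' i : Fin (k + 1) → Fin d) ⟨j, h⟩ else ⟨0, hd⟩) k
      = rcdIter f t x0 (fun j => if h : j < k then s' ⟨j, h⟩ else ⟨0, hd⟩) k := by
    apply rcdIter_congr
    intro j hj
    simp only [dif_pos hj, dif_pos (Nat.lt_succ_of_lt hj)]
    have h' : (⟨j, Nat.lt_succ_of_lt hj⟩ : Fin (k + 1)) = Fin.castSucc ⟨j, hj⟩ := rfl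
    rw [h', Fin.snoc_castSucc]
  have hlast : (if h : k < k + 1 then (Fin.snoc s' i : Fin (k + 1) → Fin d) ⟨k, h⟩
      else ⟨0, hd⟩) = i := by
    simp only [dif_pos (Nat.lt_succ_self k)]
    have h' : (⟨k, Nat.lt_succ_self k⟩ : Fin (k + 1)) = Fin.last k := rfl
    rw [h', Fin.snoc_last]
  rw [rcdIter_succ, hcongr, hlast]

set_option maxHeartbeats 2000000 in
/-- The expected squared error of unquantized randomized coordinate descent contracts
geometrically: if `C = t²L²d − 2tm + 1 < 1` then `E‖x_k − x*‖² ≤ C^k·‖x₀ − x*‖²` for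
all `k ≥ 0`, the expectation being over the i.i.d. uniform coordinate indices. -/
theorem rcd_geometric_contraction (d : ℕ) (hd : 1 ≤ d) (L m t : ℝ)
    (hm : 0 < m) (hmL : m ≤ L) (ht : 0 < t)
    (hC : t ^ 2 * L ^ 2 * d - 2 * t * m + 1 < 1)
    (f : EuclideanSpace ℝ (Fin d) → ℝ) (hf : Differentiable ℝ f)
    (hLip : ∀ x y : EuclideanSpace ℝ (Fin d),
      ‖gradient f x - gradient f y‖ ≤ L * ‖x - y‖)
    (hsc : ∀ x y : EuclideanSpace ℝ (Fin d),
      m * ‖x - y‖ ^ 2 ≤ ⟪gradient f x - gradient f y, x - y⟫)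
    (xstar : EuclideanSpace ℝ (Fin d)) (hmin : ∀ z, f xstar ≤ f z)
    (x0 : EuclideanSpace ℝ (Fin d)) (k : ℕ) :
    (1 / (d : ℝ) ^ k) * ∑ s : Fin k → Fin d,
        ‖rcdIter f t x0 (fun j => if h : j < k then s ⟨j, h⟩ else ⟨0, hd⟩) k - xstar‖ ^ 2
      ≤ (t ^ 2 * L ^ 2 * d - 2 * t * m + 1) ^ k * ‖x0 - xstar‖ ^ 2 := by
  have hd1 : (1 : ℝ) ≤ (d : ℝ) := by exact_mod_cast hd
  have hd0 : (0 : ℝ) < (d : ℝ) := lt_of_lt_of_le one_pos hd1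
  obtain ⟨C, hCdef⟩ : ∃ C : ℝ, C = t ^ 2 * L ^ 2 * (d : ℝ) - 2 * t * m + 1 := ⟨_, rfl⟩
  rw [show (t ^ 2 * L ^ 2 * (d : ℝ) - 2 * t * m + 1) = C from hCdef.symm]
  have hLm2 : m ^ 2 ≤ L ^ 2 := by nlinarith
  have hCnonneg : (0 : ℝ) ≤ C := by
    have h1 : 0 ≤ t ^ 2 * (L ^ 2 - m ^ 2) := mul_nonneg (sq_nonneg t) (by linarith)
    have h2 : 0 ≤ t ^ 2 * L ^ 2 * ((d : ℝ) - 1) :=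
      mul_nonneg (mul_nonneg (sq_nonneg t) (sq_nonneg L)) (by linarith)
    nlinarith [sq_nonneg (t * m - 1)]
  -- gradient vanishes at the minimizer
  have hgstar : gradient f xstar = 0 := by
    have hloc : IsLocalMin f xstar := Filter.Eventually.of_forall hmin
    rw [gradient, hloc.fderiv_eq_zero]
    simp
  -- one-step bound
  have step : ∀ x : EuclideanSpace ℝ (Fin d),
      ∑ i : Fin d,
          ‖(x - (t * d) • EuclideanSpace.single i (gradient f x i)) - xstar‖ ^ 2
        ≤ (d : ℝ) * C * ‖x - xstar‖ ^ 2 := by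
    intro x
    set g : EuclideanSpace ℝ (Fin d) := gradient f x with hg
    set y : EuclideanSpace ℝ (Fin d) := x - xstar with hy
    have hexp : ∀ i : Fin d,
        ‖(x - (t * d) • EuclideanSpace.single i (g i)) - xstar‖ ^ 2
          = ‖y‖ ^ 2 - 2 * (t * d) * (g i * y i) + (t * d) ^ 2 * (g i) ^ 2 := by
      intro i
      have h0 : (x - (t * d) • EuclideanSpace.single i (g i)) - xstar
          = y - (t * d) • EuclideanSpace.single i (g i) := by
        rw [hy]; abel
      rw [h0, norm_sub_sq_real, real_inner_smul_right, norm_smul]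
      have h1 : ⟪y, EuclideanSpace.single i (g i)⟫ = g i * y i := by
        have := EuclideanSpace.inner_single_right (𝕜 := ℝ) i (g i) y
        simpa [mul_comm] using this
      rw [h1, EuclideanSpace.norm_single]
      have h2 : ‖t * (d : ℝ)‖ = t * d := abs_of_pos (by positivity)
      rw [h2]
      have hgi : ‖g i‖ ^ 2 = (g i) ^ 2 := sq_abs _
      rw [mul_pow, hgi]
      ring
    have hsum : ∑ i : Fin d,
        ‖(x - (t * d) • EuclideanSpace.single i (g i)) - xstar‖ ^ 2
          = (d : ℝ) * ‖y‖ ^ 2 - 2 * (t * d) * (∑ i, g i * y i)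
            + (t * d) ^ 2 * (∑ i, (g i) ^ 2) := by
      simp only [hexp, Finset.sum_add_distrib, Finset.sum_sub_distrib, ← Finset.mul_sum,
        Finset.sum_const, Finset.card_univ, Fintype.card_fin, nsmul_eq_mul]
    have hinner : ⟪g, y⟫ = ∑ i, g i * y i := by
      simp [PiLp.inner_apply, RCLike.inner_apply]
      exact Finset.sum_congr rfl fun i _ => mul_comm _ _
    have hnormg : ‖g‖ ^ 2 = ∑ i, (g i) ^ 2 := by
      rw [← real_inner_self_eq_norm_sq]
      simp only [PiLp.inner_apply, RCLike.inner_apply, conj_trivial]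
      exact Finset.sum_congr rfl fun i _ => by ring
    have h1 : m * ‖y‖ ^ 2 ≤ ⟪g, y⟫ := by
      have := hsc x xstar
      simpa [hgstar, hy, hg] using this
    have h2 : ‖g‖ ≤ L * ‖y‖ := by
      have := hLip x xstar
      simpa [hgstar, hy, hg] using this
    have h2' : ‖g‖ ^ 2 ≤ L ^ 2 * ‖y‖ ^ 2 := by
      nlinarith [norm_nonneg g, norm_nonneg y, hm.le.trans hmL]
    rw [hsum, ← hinner, ← hnormg]
    have hCd : (d : ℝ) * C * ‖y‖ ^ 2
        = (d : ℝ) * ‖y‖ ^ 2 - 2 * (t * d) * (m * ‖y‖ ^ 2) + (t * d) ^ 2 * (L ^ 2 * ‖y‖ ^ 2) := by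
      rw [hCdef]; ring
    rw [hCd]
    have ht1 : 0 ≤ 2 * (t * (d : ℝ)) := by positivity
    have ht2 : (0 : ℝ) ≤ (t * (d : ℝ)) ^ 2 := sq_nonneg _
    nlinarith [mul_le_mul_of_nonneg_left h1 ht1, mul_le_mul_of_nonneg_left h2' ht2]
  -- induction on k
  induction k with
  | zero => simp [rcdIter]
  | succ k ih =>
    have hbij : Function.Bijective
        (fun p : (Fin k → Fin d) × Fin d => (Fin.snoc p.1 p.2 : Fin (k + 1) → Fin d)) :=
      ((Equiv.prodComm (Fin k → Fin d) (Fin d)).trans (Fin.snocEquiv fun _ => Fin d)).bijective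
    have hsum : ∑ s : Fin (k + 1) → Fin d,
          ‖rcdIter f t x0 (fun j => if h : j < k + 1 then s ⟨j, h⟩ else ⟨0, hd⟩) (k + 1)
            - xstar‖ ^ 2
        = ∑ s' : Fin k → Fin d, ∑ i : Fin d,
            ‖rcdIter f t x0
                (fun j => if h : j < k + 1 then (Fin.snoc s' i : Fin (k + 1) → Fin d) ⟨j, h⟩
                  else ⟨0, hd⟩) (k + 1) - xstar‖ ^ 2 := by
      have h1 := (Fintype.sum_bijective _ hbij
        (fun p : (Fin k → Fin d) × Fin d =>
          ‖rcdIter f t x0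
              (fun j => if h : j < k + 1 then (Fin.snoc p.1 p.2 : Fin (k + 1) → Fin d) ⟨j, h⟩
                else ⟨0, hd⟩) (k + 1) - xstar‖ ^ 2)
        (fun s : Fin (k + 1) → Fin d =>
          ‖rcdIter f t x0 (fun j => if h : j < k + 1 then s ⟨j, h⟩ else ⟨0, hd⟩) (k + 1)
            - xstar‖ ^ 2) fun p => rfl).symm
      rw [h1, Fintype.sum_prod_type]
    calc 1 / (d : ℝ) ^ (k + 1) * ∑ s : Fin (k + 1) → Fin d,
          ‖rcdIter f t x0 (fun j => if h : j < k + 1 then s ⟨j, h⟩ else ⟨0, hd⟩) (k + 1)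
            - xstar‖ ^ 2
        = 1 / (d : ℝ) ^ (k + 1) * ∑ s' : Fin k → Fin d, ∑ i : Fin d,
            ‖rcdIter f t x0
                (fun j => if h : j < k + 1 then (Fin.snoc s' i : Fin (k + 1) → Fin d) ⟨j, h⟩
                  else ⟨0, hd⟩) (k + 1) - xstar‖ ^ 2 := by rw [hsum]
      _ ≤ 1 / (d : ℝ) ^ (k + 1) * ∑ s' : Fin k → Fin d, (d : ℝ) * C *
            ‖rcdIter f t x0 (fun j => if h : j < k then s' ⟨j, h⟩ else ⟨0, hd⟩) k
              - xstar‖ ^ 2 := by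
          have hpos : (0 : ℝ) ≤ 1 / (d : ℝ) ^ (k + 1) := by positivity
          refine mul_le_mul_of_nonneg_left ?_ hpos
          apply Finset.sum_le_sum
          intro s' _
          have hrw : ∀ i : Fin d,
              ‖rcdIter f t x0
                  (fun j => if h : j < k + 1 then (Fin.snoc s' i : Fin (k + 1) → Fin d) ⟨j, h⟩
                    else ⟨0, hd⟩) (k + 1) - xstar‖ ^ 2
                = ‖(rcdIter f t x0 (fun j => if h : j < k then s' ⟨j, h⟩ else ⟨0, hd⟩) k
                    - (t * d) • EuclideanSpace.single i
                      (gradient f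
                        (rcdIter f t x0 (fun j => if h : j < k then s' ⟨j, h⟩ else ⟨0, hd⟩) k) i))
                    - xstar‖ ^ 2 := by
            intro i
            rw [rcdIter_snoc hd]
          rw [Finset.sum_congr rfl fun i _ => hrw i]
          exact step _
      _ = C * (1 / (d : ℝ) ^ k * ∑ s' : Fin k → Fin d,
            ‖rcdIter f t x0 (fun j => if h : j < k then s' ⟨j, h⟩ else ⟨0, hd⟩) k
              - xstar‖ ^ 2) := by
          rw [← Finset.mul_sum]
          field_simp
          ring
      _ ≤ C * (C ^ k * ‖x0 - xstar‖ ^ 2) := mul_le_mul_of_nonneg_left ih hCnonneg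
      _ = C ^ (k + 1) * ‖x0 - xstar‖ ^ 2 := by ring
end

section
/- One-step expected error inequality for the quantized iterate: let f : ℝ^d → ℝ be differentiable with ∇f L-Lipschitz and f m-strongly convex, 0 < m ≤ L, minimizer x*. Fix t > 0, Δ ≥ 0, set C = t²L²d − 2tm + 1, and let y ∈ ℝ^d and n ∈ ℝ^d with ‖n‖ ≤ Δ/2. If S is uniform on {1,…,d}, then E_S ‖(y + t·d·n) − t·d·[∇f(y + t·d·n)]_S − x*‖² ≤ C·(‖y − x*‖² + t·d·Δ·‖y − x*‖ + t²d²Δ²/4). -/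
open scoped RealInnerProductSpace

private lemma qrcd_aux (d L m t Δ A G I B : ℝ) (hd : 1 ≤ d)
    (hm : 0 < m) (hmL : m ≤ L) (ht : 0 < t) (hΔ : 0 ≤ Δ)
    (hA : 0 ≤ A) (hB : 0 ≤ B) (hG : 0 ≤ G)
    (hI : m * A ^ 2 ≤ I) (hGL : G ≤ L * A) (hAB : A ≤ B + t * d * (Δ / 2)) :
    A ^ 2 - 2 * t * I + t ^ 2 * d * G ^ 2
      ≤ (t ^ 2 * L ^ 2 * d - 2 * t * m + 1) *
          (B ^ 2 + t * d * Δ * B + t ^ 2 * d ^ 2 * Δ ^ 2 / 4) := by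
  have hC : (0:ℝ) ≤ t ^ 2 * L ^ 2 * d - 2 * t * m + 1 := by
    have h1 : (0:ℝ) ≤ (t * m - 1) ^ 2 := sq_nonneg _
    have h2 : m ^ 2 ≤ L ^ 2 * d := by nlinarith
    have h3 : t ^ 2 * m ^ 2 ≤ t ^ 2 * (L ^ 2 * d) :=
      mul_le_mul_of_nonneg_left h2 (sq_nonneg t)
    nlinarith
  have hG2 : G ^ 2 ≤ (L * A) ^ 2 := by nlinarith
  have h4 : t ^ 2 * d * G ^ 2 ≤ t ^ 2 * d * (L * A) ^ 2 :=
    mul_le_mul_of_nonneg_left hG2 (by positivity)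
  have h5 : 2 * t * (m * A ^ 2) ≤ 2 * t * I :=
    mul_le_mul_of_nonneg_left hI (by positivity)
  have step1 : A ^ 2 - 2 * t * I + t ^ 2 * d * G ^ 2
      ≤ (t ^ 2 * L ^ 2 * d - 2 * t * m + 1) * A ^ 2 := by nlinarith
  have hA2 : A ^ 2 ≤ B ^ 2 + t * d * Δ * B + t ^ 2 * d ^ 2 * Δ ^ 2 / 4 := by
    have h6 : A ^ 2 ≤ (B + t * d * (Δ / 2)) ^ 2 := by
      have := mul_self_le_mul_self hA hAB
      nlinarith
    nlinarith
  calc A ^ 2 - 2 * t * I + t ^ 2 * d * G ^ 2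
      ≤ (t ^ 2 * L ^ 2 * d - 2 * t * m + 1) * A ^ 2 := step1
    _ ≤ (t ^ 2 * L ^ 2 * d - 2 * t * m + 1) *
          (B ^ 2 + t * d * Δ * B + t ^ 2 * d ^ 2 * Δ ^ 2 / 4) :=
        mul_le_mul_of_nonneg_left hA2 hC

/-- One-step expected error inequality for the quantized iterate: if `‖n‖ ≤ Δ/2` and
`C = t²L²d − 2tm + 1`, then for `S` uniform on the `d` coordinates,
`E_S ‖(y + t·d·n) − t·d·[∇f(y + t·d·n)]_S − x*‖²
  ≤ C·(‖y − x*‖² + t·d·Δ·‖y − x*‖ + t²d²Δ²/4)`. -/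
theorem qrcd_one_step_expected_error (d : ℕ) (hd : 1 ≤ d) (L m t Δ : ℝ)
    (hm : 0 < m) (hmL : m ≤ L) (ht : 0 < t) (hΔ : 0 ≤ Δ)
    (f : EuclideanSpace ℝ (Fin d) → ℝ) (hf : Differentiable ℝ f)
    (hLip : ∀ x y : EuclideanSpace ℝ (Fin d),
      ‖gradient f x - gradient f y‖ ≤ L * ‖x - y‖)
    (hsc : ∀ x y : EuclideanSpace ℝ (Fin d),
      m * ‖x - y‖ ^ 2 ≤ ⟪gradient f x - gradient f y, x - y⟫)
    (xstar : EuclideanSpace ℝ (Fin d)) (hmin : ∀ z, f xstar ≤ f z)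
    (y n : EuclideanSpace ℝ (Fin d)) (hn : ‖n‖ ≤ Δ / 2) :
    (1 / d : ℝ) * ∑ i : Fin d,
        ‖(y + (t * d) • n) -
            (t * d) • EuclideanSpace.single i (gradient f (y + (t * d) • n) i) - xstar‖ ^ 2
      ≤ (t ^ 2 * L ^ 2 * d - 2 * t * m + 1) *
          (‖y - xstar‖ ^ 2 + t * d * Δ * ‖y - xstar‖ + t ^ 2 * d ^ 2 * Δ ^ 2 / 4) := by
  have hd0 : (0 : ℝ) < d := by exact_mod_cast Nat.lt_of_lt_of_le Nat.zero_lt_one hd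
  have hdne : (d : ℝ) ≠ 0 := ne_of_gt hd0
  obtain ⟨z, hz⟩ : ∃ z, z = y + (t * (d:ℝ)) • n := ⟨_, rfl⟩
  obtain ⟨g, hg⟩ : ∃ g, g = gradient f z := ⟨_, rfl⟩
  obtain ⟨a, haa⟩ : ∃ a, a = z - xstar := ⟨_, rfl⟩
  -- gradient at minimizer is zero
  have hloc : IsLocalMin f xstar := Filter.Eventually.of_forall hmin
  have hfd : fderiv ℝ f xstar = 0 := hloc.fderiv_eq_zero
  have hgrad0 : gradient f xstar = 0 := by
    rw [gradient, hfd, map_zero]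
  -- expand the sum
  have h1 : ∀ i : Fin d,
      ‖z - (t * d) • EuclideanSpace.single i (g i) - xstar‖ ^ 2
      = ‖a‖ ^ 2 - 2 * (t * d * (g i * a i)) + (t * d) ^ 2 * (g i) ^ 2 := by
    intro i
    have hrw : z - (t * (d:ℝ)) • EuclideanSpace.single i (g i) - xstar
        = a - (t * (d:ℝ)) • EuclideanSpace.single i (g i) := by
      rw [haa]; abel
    have hinner : ⟪a, EuclideanSpace.single i (g i)⟫ = g i * a i := by
      rw [real_inner_comm, EuclideanSpace.inner_single_left]
      simp
    rw [hrw, norm_sub_sq_real, real_inner_smul_right, hinner, norm_smul,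
      EuclideanSpace.norm_single, Real.norm_eq_abs, Real.norm_eq_abs, mul_pow, sq_abs, sq_abs]
  have hia : ⟪g, a⟫ = ∑ i, g i * a i := by
    simp [PiLp.inner_apply, RCLike.inner_apply, conj_trivial]
    exact Finset.sum_congr rfl (fun i _ => mul_comm _ _)
  have hgg : ‖g‖ ^ 2 = ∑ i, (g i) ^ 2 := by
    rw [EuclideanSpace.norm_eq, Real.sq_sqrt (Finset.sum_nonneg fun i _ => sq_nonneg _)]
    simp [Real.norm_eq_abs, sq_abs]
  have h1' : ∀ i : Fin d,
      ‖z - (t * d) • EuclideanSpace.single i (g i) - xstar‖ ^ 2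
      = ‖a‖ ^ 2 - 2 * (t * d) * (g i * a i) + (t * d) ^ 2 * (g i) ^ 2 :=
    fun i => (h1 i).trans (by ring)
  have hexp : ∑ i : Fin d,
      ‖z - (t * d) • EuclideanSpace.single i (g i) - xstar‖ ^ 2
      = (d : ℝ) * ‖a‖ ^ 2 - 2 * (t * d) * ⟪g, a⟫ + (t * d) ^ 2 * ‖g‖ ^ 2 := by
    simp only [h1']
    rw [Finset.sum_add_distrib, Finset.sum_sub_distrib, ← Finset.mul_sum, ← Finset.mul_sum,
      ← hia, ← hgg]
    simp [Finset.sum_const, Finset.card_univ, mul_comm]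
  -- bounds
  have hscz : m * ‖a‖ ^ 2 ≤ ⟪g, a⟫ := by
    have := hsc z xstar
    rwa [hgrad0, sub_zero, ← haa, ← hg] at this
  have hlipz : ‖g‖ ≤ L * ‖a‖ := by
    have := hLip z xstar
    rwa [hgrad0, sub_zero, ← haa, ← hg] at this
  have hna : ‖a‖ ≤ ‖y - xstar‖ + t * d * (Δ / 2) := by
    have hrw : a = (y - xstar) + (t * (d:ℝ)) • n := by rw [haa, hz]; abel
    rw [hrw]
    refine le_trans (norm_add_le _ _) ?_
    have h2 : ‖(t * (d:ℝ)) • n‖ = t * d * ‖n‖ := by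
      rw [norm_smul, Real.norm_eq_abs, abs_of_pos (by positivity)]
    have h3 : t * (d:ℝ) * ‖n‖ ≤ t * d * (Δ / 2) :=
      mul_le_mul_of_nonneg_left hn (by positivity)
    rw [h2]
    linarith
  -- rewrite the goal
  rw [← hz, ← hg, hexp]
  have key : (1 / d : ℝ) * ((d : ℝ) * ‖a‖ ^ 2 - 2 * (t * d) * ⟪g, a⟫ + (t * d) ^ 2 * ‖g‖ ^ 2)
      = ‖a‖ ^ 2 - 2 * t * ⟪g, a⟫ + t ^ 2 * d * ‖g‖ ^ 2 := by
    field_simp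
  rw [key]
  exact qrcd_aux d L m t Δ ‖a‖ ‖g‖ ⟪g, a⟫ ‖y - xstar‖ (by exact_mod_cast hd)
    hm hmL ht hΔ (norm_nonneg _) (norm_nonneg _) (norm_nonneg _) hscz hlipz hna
end
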